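/- Let k ≥ 1 be a real number and let Γ be a finite simple graph on n vertices with minimum degree δ(Γ) ≥ 1 and maximum degree Δ(Γ) ≤ k·δ(Γ). Set b = √(δ(Γ)). Then mis(Γ) ≤ Σ_{0 ≤ i ≤ n/b} C(n, i) · 3^{(k/(k+1))·(n/3) + 2n/(3b)}, where C(n, i) denotes the binomial coefficient. -/

import Mathlib

/-- The number of maximal independent sets of a simple graph. -/
noncomputable def misSG {V : Type*} (Γ : SimpleGraph V) : ℕ :=
  Nat.card {I : Set V // (∀ x ∈ I, ∀ y ∈ I, ¬ Γ.Adj x y) ∧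
    ∀ J : Set V, (∀ x ∈ J, ∀ y ∈ J, ¬ Γ.Adj x y) → I ⊆ J → I = J}

open Finset

section Aux
variable {V : Type} [Fintype V] [DecidableEq V] (Γ : SimpleGraph V) [DecidableRel Γ.Adj]

/-- number of neighbors of `v` inside `A`. -/
def misDeg (A : Finset V) (v : V) : ℕ := (A.filter (Γ.Adj v)).card

def misIndep (I : Finset V) : Prop := ∀ x ∈ I, ∀ y ∈ I, ¬ Γ.Adj x y

def misIsMIS (A I : Finset V) : Prop :=
  I ⊆ A ∧ misIndep Γ I ∧ ∀ x ∈ A, (∀ y ∈ I, ¬ Γ.Adj x y) → x ∈ I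

instance (A I : Finset V) : Decidable (misIsMIS Γ A I) := by
  unfold misIsMIS misIndep; infer_instance

/-- number of maximal independent sets of the induced subgraph on `A`. -/
def misF (A : Finset V) : ℕ := (A.powerset.filter (misIsMIS Γ A)).card

/-- closed neighborhood of `u` within `A`. -/
def misNcl (A : Finset V) (u : V) : Finset V := insert u (A.filter (Γ.Adj u))

lemma misNcl_subset {A : Finset V} {u : V} (hu : u ∈ A) : misNcl Γ A u ⊆ A := by
  intro x hx
  rcases mem_insert.1 hx with rfl | hx
  · exact hu
  · exact (mem_filter.1 hx).1

lemma misNcl_card {A : Finset V} (u : V) : (misNcl Γ A u).card = misDeg Γ A u + 1 := by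
  rw [misNcl, card_insert_of_notMem, misDeg]
  simp [Γ.irrefl]

lemma misF_empty : misF Γ ∅ = 1 := by
  have h : misIsMIS Γ ∅ ∅ := by simp [misIsMIS, misIndep]
  rw [misF, powerset_empty, filter_singleton, if_pos h, card_singleton]

lemma mm_step (A : Finset V) (v : V) (hv : v ∈ A) :
    misF Γ A ≤ ∑ u ∈ misNcl Γ A v, misF Γ (A \ misNcl Γ A u) := by
  classical
  set pick : Finset V → V := fun I =>
    if h : (I ∩ misNcl Γ A v).Nonempty then h.choose else v with hpick
  have hpmem : ∀ I ∈ A.powerset.filter (misIsMIS Γ A), pick I ∈ I ∩ misNcl Γ A v := by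
    intro I hI
    rw [mem_filter, mem_powerset] at hI
    obtain ⟨hIA, _, hind, hmax⟩ := hI
    have hne : (I ∩ misNcl Γ A v).Nonempty := by
      by_contra hcon
      rw [not_nonempty_iff_eq_empty] at hcon
      have hvI : v ∈ I := by
        apply hmax v hv
        intro y hy hadj
        have : y ∈ I ∩ misNcl Γ A v := by
          refine mem_inter.2 ⟨hy, mem_insert.2 (Or.inr (mem_filter.2 ⟨hIA hy, hadj⟩))⟩
        rw [hcon] at this; exact notMem_empty _ this
      have : v ∈ I ∩ misNcl Γ A v := mem_inter.2 ⟨hvI, mem_insert_self _ _⟩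
      rw [hcon] at this; exact notMem_empty _ this
    rw [hpick]; simp only [dif_pos hne]; exact hne.choose_spec
  have key : (A.powerset.filter (misIsMIS Γ A)).card ≤
      ((misNcl Γ A v).sigma (fun u => ((A \ misNcl Γ A u).powerset.filter
        (misIsMIS Γ (A \ misNcl Γ A u))))).card := by
    apply card_le_card_of_injOn (fun I => (⟨pick I, I.erase (pick I)⟩ :
        (_ : V) × Finset V))
    · intro I hI
      have hpI := hpmem I hI
      rw [mem_coe, mem_filter, mem_powerset] at hI
      obtain ⟨hIA, _, hind, hmax⟩ := hI
      set u := pick I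
      have huI : u ∈ I := (mem_inter.1 hpI).1
      have huN : u ∈ misNcl Γ A v := (mem_inter.1 hpI).2
      have herase : I.erase u ⊆ A \ misNcl Γ A u := by
        intro x hx
        obtain ⟨hxu, hxI⟩ := mem_erase.1 hx
        refine mem_sdiff.2 ⟨hIA hxI, ?_⟩
        intro hxN
        rcases mem_insert.1 hxN with rfl | hxf
        · exact hxu rfl
        · exact hind u huI x hxI (mem_filter.1 hxf).2
      refine mem_sigma.2 ⟨huN, ?_⟩
      rw [mem_filter, mem_powerset]
      refine ⟨herase, herase, fun x hx y hy => hind x (erase_subset _ _ hx) y (erase_subset _ _ hy), ?_⟩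
      intro x hx hxnon
      obtain ⟨hxA, hxN⟩ := mem_sdiff.1 hx
      have hxu : x ≠ u := fun h => hxN (h ▸ mem_insert_self _ _)
      have hxI : x ∈ I := by
        apply hmax x hxA
        intro y hy
        rcases eq_or_ne y u with rfl | hyu
        · intro hadj
          exact hxN (mem_insert.2 (Or.inr (mem_filter.2 ⟨hxA, (Γ.adj_symm hadj)⟩)))
        · exact hxnon y (mem_erase.2 ⟨hyu, hy⟩)
      exact mem_erase.2 ⟨hxu, hxI⟩
    · intro I₁ h₁ I₂ h₂ heq
      have hp₁ := (mem_inter.1 (hpmem I₁ h₁)).1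
      have hp₂ := (mem_inter.1 (hpmem I₂ h₂)).1
      have hu' : pick I₁ = pick I₂ := (Sigma.mk.inj_iff.1 heq).1
      have he' : I₁.erase (pick I₁) = I₂.erase (pick I₂) :=
        eq_of_heq (Sigma.mk.inj_iff.1 heq).2
      have : insert (pick I₁) (I₁.erase (pick I₁)) =
          insert (pick I₂) (I₂.erase (pick I₂)) := by rw [he', hu']
      rwa [insert_erase hp₁, insert_erase hp₂] at this
  calc misF Γ A ≤ _ := key
    _ = ∑ u ∈ misNcl Γ A v, misF Γ (A \ misNcl Γ A u) := by
        rw [card_sigma]; rfl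


lemma one_le_log_three : (1:ℝ) ≤ Real.log 3 := by
  rw [Real.le_log_iff_exp_le (by norm_num)]
  exact (Real.exp_one_lt_d9.le.trans (by norm_num))

lemma nat_le_rpow_third (j : ℕ) : (j : ℝ) ≤ (3:ℝ) ^ ((j : ℝ) / 3) := by
  match j with
  | 0 =>
    have := Real.rpow_nonneg (show (0:ℝ) ≤ 3 by norm_num) (((0:ℕ):ℝ)/3)
    simpa using this
  | 1 =>
    have : (3:ℝ) ^ (0:ℝ) ≤ (3:ℝ) ^ ((1:ℝ)/3) :=
      Real.rpow_le_rpow_of_exponent_le (by norm_num) (by norm_num)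
    simpa using this
  | 2 =>
    have h8 : ((2:ℝ)) = ((8:ℝ)) ^ ((1:ℝ)/3) := by
      have : ((8:ℝ)) = (2:ℝ) ^ (3:ℝ) := by
        rw [show (3:ℝ) = ((3:ℕ):ℝ) by norm_num, Real.rpow_natCast]; norm_num
      rw [this, ← Real.rpow_mul (by norm_num)]
      norm_num
    have h9 : ((3:ℝ)) ^ ((2:ℝ)/3) = ((9:ℝ)) ^ ((1:ℝ)/3) := by
      have : ((9:ℝ)) = (3:ℝ) ^ (2:ℝ) := by
        rw [show (2:ℝ) = ((2:ℕ):ℝ) by norm_num, Real.rpow_natCast]; norm_num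
      rw [this, ← Real.rpow_mul (by norm_num)]
      norm_num
    push_cast
    calc (2:ℝ) = (8:ℝ) ^ ((1:ℝ)/3) := h8
      _ ≤ (9:ℝ) ^ ((1:ℝ)/3) := Real.rpow_le_rpow (by norm_num) (by norm_num) (by norm_num)
      _ = (3:ℝ) ^ ((2:ℝ)/3) := h9.symm
  | (m+3) =>
    have hexp : (3:ℝ) ^ ((m:ℝ)/3) = Real.exp ((m:ℝ)/3 * Real.log 3) := by
      rw [Real.rpow_def_of_pos (by norm_num), mul_comm]
    have h1 : (1:ℝ) + (m:ℝ)/3 ≤ (3:ℝ) ^ ((m:ℝ)/3) := by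
      rw [hexp]
      calc (1:ℝ) + (m:ℝ)/3 ≤ 1 + (m:ℝ)/3 * Real.log 3 := by
            have : (0:ℝ) ≤ (m:ℝ)/3 := by positivity
            nlinarith [one_le_log_three]
        _ ≤ Real.exp ((m:ℝ)/3 * Real.log 3) := by
            have := Real.add_one_le_exp ((m:ℝ)/3 * Real.log 3)
            linarith
    have hsplit : (3:ℝ) ^ (((m:ℝ)+3)/3) = 3 * (3:ℝ) ^ ((m:ℝ)/3) := by
      rw [show ((m:ℝ)+3)/3 = (m:ℝ)/3 + 1 by ring, Real.rpow_add_one (by norm_num)]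
      ring
    push_cast
    rw [hsplit]
    nlinarith [h1]

lemma mm_bound (A : Finset V) : (misF Γ A : ℝ) ≤ (3:ℝ) ^ ((A.card : ℝ) / 3) := by
  induction A using Finset.strongInduction with
  | _ A ih =>
    rcases A.eq_empty_or_nonempty with rfl | hA
    · rw [misF_empty]; simp
    · obtain ⟨v, hv, hmin⟩ := A.exists_min_image (misDeg Γ A) hA
      have hNv : misNcl Γ A v ⊆ A := misNcl_subset Γ hv
      set d := misDeg Γ A v with hd
      have hcardNv : (misNcl Γ A v).card = d + 1 := misNcl_card Γ v
      have hd1A : d + 1 ≤ A.card := hcardNv ▸ card_le_card hNv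
      have step := mm_step Γ A v hv
      have hsum : (∑ u ∈ misNcl Γ A v, (misF Γ (A \ misNcl Γ A u) : ℝ)) ≤
          (d+1 : ℝ) * (3:ℝ) ^ (((A.card : ℝ) - (d+1)) / 3) := by
        have hterm : ∀ u ∈ misNcl Γ A v,
            (misF Γ (A \ misNcl Γ A u) : ℝ) ≤ (3:ℝ) ^ (((A.card : ℝ) - (d+1)) / 3) := by
          intro u hu
          have huA : u ∈ A := hNv hu
          have hNu : misNcl Γ A u ⊆ A := misNcl_subset Γ huA
          have hssub : A \ misNcl Γ A u ⊂ A := by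
            refine Finset.sdiff_ssubset ?_ ?_
            · exact hNu
            · exact ⟨u, mem_insert_self _ _⟩
          have hcard : ((A \ misNcl Γ A u).card : ℝ) = (A.card : ℝ) - (misDeg Γ A u + 1) := by
            rw [card_sdiff_of_subset hNu, misNcl_card]
            have : misDeg Γ A u + 1 ≤ A.card := (misNcl_card Γ u) ▸ card_le_card hNu
            push_cast [Nat.cast_sub this]
            ring
          calc (misF Γ (A \ misNcl Γ A u) : ℝ) ≤ (3:ℝ) ^ (((A \ misNcl Γ A u).card : ℝ)/3) :=
                ih _ hssub
            _ ≤ (3:ℝ) ^ (((A.card : ℝ) - (d+1)) / 3) := by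
                apply Real.rpow_le_rpow_of_exponent_le (by norm_num)
                rw [hcard]
                have : (d : ℝ) ≤ (misDeg Γ A u : ℝ) := by exact_mod_cast hmin u huA
                linarith
        calc (∑ u ∈ misNcl Γ A v, (misF Γ (A \ misNcl Γ A u) : ℝ))
            ≤ ∑ _u ∈ misNcl Γ A v, (3:ℝ) ^ (((A.card : ℝ) - (d+1)) / 3) :=
              Finset.sum_le_sum hterm
          _ = (d+1 : ℝ) * (3:ℝ) ^ (((A.card : ℝ) - (d+1)) / 3) := by
              rw [Finset.sum_const, hcardNv]; push_cast; ring
      have hfinal : (d+1 : ℝ) * (3:ℝ) ^ (((A.card : ℝ) - (d+1)) / 3) ≤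
          (3:ℝ) ^ ((A.card : ℝ)/3) := by
        have h1 : (d+1 : ℝ) ≤ (3:ℝ) ^ (((d:ℝ)+1)/3) := by
          have := nat_le_rpow_third (d+1)
          push_cast at this ⊢
          exact this
        have h2 : (3:ℝ) ^ (((d:ℝ)+1)/3) * (3:ℝ) ^ (((A.card : ℝ) - (d+1)) / 3) =
            (3:ℝ) ^ ((A.card : ℝ)/3) := by
          rw [← Real.rpow_add (by norm_num)]
          ring_nf
        calc (d+1 : ℝ) * (3:ℝ) ^ (((A.card : ℝ) - (d+1)) / 3)
            ≤ (3:ℝ) ^ (((d:ℝ)+1)/3) * (3:ℝ) ^ (((A.card : ℝ) - (d+1)) / 3) := by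
              apply mul_le_mul_of_nonneg_right h1 (by positivity)
          _ = (3:ℝ) ^ ((A.card : ℝ)/3) := h2
      calc (misF Γ A : ℝ) ≤ ∑ u ∈ misNcl Γ A v, (misF Γ (A \ misNcl Γ A u) : ℝ) := by
            exact_mod_cast step
        _ ≤ _ := hsum
        _ ≤ _ := hfinal


def misRem (A S : Finset V) : Finset V :=
  A.filter (fun x => ∀ s ∈ S, ¬(s = x ∨ Γ.Adj s x))

lemma misRem_empty (A : Finset V) : misRem Γ A ∅ = A := by
  simp [misRem]

lemma misRem_insert (A : Finset V) (u : V) (S : Finset V) :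
    misRem Γ (misRem Γ A {u}) S = misRem Γ A (insert u S) := by
  rw [misRem, misRem, misRem, filter_filter]
  apply filter_congr
  intro x _
  simp only [mem_singleton, mem_insert, forall_eq]
  constructor
  · rintro ⟨h1, h2⟩ s hs
    rcases hs with rfl | hs
    · exact h1
    · exact h2 s hs
  · intro h
    exact ⟨h u (Or.inl rfl), fun s hs => h s (Or.inr hs)⟩

lemma fingerprint (b : ℝ) (W : Finset V) :
    ∀ I : Finset V, misIndep Γ I → I ⊆ W →
    ∃ S : Finset V, S ⊆ I ∧
      (b+1) * S.card ≤ (W.card : ℝ) - ((misRem Γ W S).card : ℝ) ∧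
      ∀ u ∈ I, u ∉ S → ((misDeg Γ (misRem Γ W S) u : ℝ) < b) := by
  induction W using Finset.strongInduction with
  | _ W ih =>
    intro I hind hIW
    by_cases hex : ∃ u ∈ I, b ≤ (misDeg Γ W u : ℝ)
    · obtain ⟨u, huI, hbu⟩ := hex
      set W₂ := misRem Γ W {u} with hW2
      have hW2sub : W₂ ⊆ W := filter_subset _ _
      have huW : u ∈ W := hIW huI
      have huW2 : u ∉ W₂ := by simp [hW2, misRem]
      have hss : W₂ ⊂ W := ⟨hW2sub, fun h => huW2 (h huW)⟩
      have hNsub : misNcl Γ W u ⊆ W := misNcl_subset Γ huW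
      have hdisj : Disjoint (misNcl Γ W u) W₂ := by
        rw [disjoint_left]
        intro x hxN hxW2
        have hx2 := (mem_filter.1 hxW2).2
        rcases mem_insert.1 hxN with rfl | hxf
        · exact hx2 x (mem_singleton_self x) (Or.inl rfl)
        · exact hx2 u (mem_singleton_self u) (Or.inr (mem_filter.1 hxf).2)
      have hcard2 : W₂.card + (misDeg Γ W u + 1) ≤ W.card := by
        rw [← misNcl_card]
        calc W₂.card + (misNcl Γ W u).card = (W₂ ∪ misNcl Γ W u).card :=
              (card_union_of_disjoint hdisj.symm).symm
          _ ≤ W.card := card_le_card (union_subset hW2sub hNsub)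
      have hI2 : I.erase u ⊆ W₂ := by
        intro x hx
        obtain ⟨hxu, hxI⟩ := mem_erase.1 hx
        refine mem_filter.2 ⟨hIW hxI, ?_⟩
        intro s hs
        rw [mem_singleton] at hs
        rw [hs]
        rintro (h | h)
        · exact hxu h.symm
        · exact hind u huI x hxI h
      obtain ⟨S₂, hS₂I, hS₂card, hS₂deg⟩ := ih W₂ hss (I.erase u)
        (fun x hx y hy => hind x (erase_subset _ _ hx) y (erase_subset _ _ hy)) hI2
      have huS₂ : u ∉ S₂ := fun h => (mem_erase.1 (hS₂I h)).1 rfl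
      have hrem : misRem Γ W (insert u S₂) = misRem Γ W₂ S₂ := (misRem_insert Γ W u S₂).symm
      refine ⟨insert u S₂, ?_, ?_, ?_⟩
      · intro x hx
        rcases mem_insert.1 hx with rfl | hx
        · exact huI
        · exact erase_subset _ _ (hS₂I hx)
      · rw [card_insert_of_notMem huS₂, hrem]
        have hc2 : (W₂.card : ℝ) + (b+1) ≤ (W.card : ℝ) := by
          have : (W₂.card : ℝ) + ((misDeg Γ W u : ℝ) + 1) ≤ (W.card : ℝ) := by
            exact_mod_cast hcard2
          linarith
        push_cast
        linarith [hS₂card]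
      · intro x hxI hxS
        rw [hrem]
        exact hS₂deg x (mem_erase.2 ⟨fun h => hxS (h ▸ mem_insert_self _ _), hxI⟩)
          (fun h => hxS (mem_insert_of_mem h))
    · push_neg at hex
      refine ⟨∅, empty_subset _, ?_, ?_⟩
      · rw [misRem_empty]; simp
      · intro u huI _
        rw [misRem_empty]
        exact hex u huI


lemma misDeg_univ (w : V) : misDeg Γ univ w = Γ.degree w := by
  rw [misDeg, ← SimpleGraph.neighborFinset_eq_filter]
  rfl

lemma misDeg_split (R : Finset V) (w : V) :
    misDeg Γ univ w = misDeg Γ (univ \ R) w + misDeg Γ R w := by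
  rw [misDeg, misDeg, misDeg, ← card_union_of_disjoint
    (disjoint_filter_filter sdiff_disjoint), ← filter_union,
    sdiff_union_of_subset (subset_univ R)]

lemma misDeg_doublecount (P Q : Finset V) :
    ∑ w ∈ P, misDeg Γ Q w = ∑ v ∈ Q, misDeg Γ P v := by
  simp only [misDeg, card_filter]
  rw [Finset.sum_comm]
  refine Finset.sum_congr rfl fun v _ => Finset.sum_congr rfl fun w _ => ?_
  exact if_congr (Γ.adj_comm w v) rfl rfl

lemma misSG_le_misF : misSG Γ ≤ misF Γ univ := by
  classical
  have hmem : ∀ (I : Set V), ((∀ x ∈ I, ∀ y ∈ I, ¬ Γ.Adj x y) ∧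
      ∀ J : Set V, (∀ x ∈ J, ∀ y ∈ J, ¬ Γ.Adj x y) → I ⊆ J → I = J) →
      I.toFinset ∈ univ.powerset.filter (misIsMIS Γ univ) := by
    intro I hI
    rw [mem_filter, mem_powerset]
    refine ⟨subset_univ _, subset_univ _, ?_, ?_⟩
    · intro x hx y hy
      exact hI.1 x (Set.mem_toFinset.1 hx) y (Set.mem_toFinset.1 hy)
    · intro x _ hxnon
      have hJ : ∀ a ∈ I ∪ {x}, ∀ c ∈ I ∪ {x}, ¬ Γ.Adj a c := by
        intro a ha c hc
        rcases ha with ha | ha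
        · rcases hc with hc | hc
          · exact hI.1 a ha c hc
          · rw [Set.mem_singleton_iff] at hc; subst hc
            exact fun hadj => hxnon a (Set.mem_toFinset.2 ha) hadj.symm
        · rw [Set.mem_singleton_iff] at ha; subst ha
          rcases hc with hc | hc
          · exact fun hadj => hxnon c (Set.mem_toFinset.2 hc) hadj
          · rw [Set.mem_singleton_iff] at hc; subst hc
            exact Γ.irrefl
      have hIx := hI.2 (I ∪ {x}) hJ Set.subset_union_left
      rw [Set.mem_toFinset, hIx]
      exact Set.mem_union_right _ rfl
  let f : {I : Set V // (∀ x ∈ I, ∀ y ∈ I, ¬ Γ.Adj x y) ∧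
      ∀ J : Set V, (∀ x ∈ J, ∀ y ∈ J, ¬ Γ.Adj x y) → I ⊆ J → I = J} →
      {J // J ∈ univ.powerset.filter (misIsMIS Γ univ)} :=
    fun I => ⟨I.1.toFinset, hmem I.1 I.2⟩
  have hinj : Function.Injective f := by
    intro I₁ I₂ h
    apply Subtype.ext
    exact Set.toFinset_inj.1 (congrArg Subtype.val h)
  calc misSG Γ ≤ Nat.card {J // J ∈ univ.powerset.filter (misIsMIS Γ univ)} :=
        Nat.card_le_card_of_injective f hinj
    _ = misF Γ univ := Nat.card_eq_finsetCard _

lemma wlow_card_bound (k b : ℝ) (hk : 1 ≤ k) (hb1 : 1 ≤ b)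
    (hδb : ((Γ.minDegree : ℝ)) = b * b)
    (hΔk : (Γ.maxDegree : ℝ) ≤ k * (Γ.minDegree : ℝ)) (S : Finset V) :
    ((((misRem Γ univ S).filter
        (fun w => (misDeg Γ (misRem Γ univ S) w : ℝ) < b)).card : ℝ)) ≤
      k * (Fintype.card V) / (k+1) + 2 * (Fintype.card V) / b := by
  classical
  set R := misRem Γ univ S with hR
  set Wl := R.filter (fun w => (misDeg Γ R w : ℝ) < b) with hWl
  set Df := univ \ R with hDf
  have hWlR : Wl ⊆ R := filter_subset _ _
  set L : ℝ := (Wl.card : ℝ) with hLdef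
  set Dc : ℝ := (Df.card : ℝ) with hDcdef
  set N : ℝ := ((Fintype.card V : ℕ) : ℝ) with hNdef
  have hN0 : 0 ≤ N := by positivity
  have hL0 : 0 ≤ L := by positivity
  have hDc0 : 0 ≤ Dc := by positivity
  have hsplitN : L + Dc ≤ N := by
    have h1 : Wl.card ≤ R.card := card_le_card hWlR
    have h2 : R.card + Df.card = Fintype.card V := by
      rw [hDf, card_sdiff_of_subset (subset_univ R), ← card_univ]
      have := card_le_card (subset_univ R)
      omega
    rw [hLdef, hDcdef, hNdef]
    push_cast
    rw [← h2]
    push_cast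
    have : (Wl.card : ℝ) ≤ (R.card : ℝ) := by exact_mod_cast h1
    linarith
  have hdeglow : ∀ w ∈ Wl, (b*b) - b ≤ (misDeg Γ Df w : ℝ) := by
    intro w hw
    have h1 : misDeg Γ univ w = misDeg Γ Df w + misDeg Γ R w := misDeg_split Γ R w
    have h2 : (Γ.minDegree : ℝ) ≤ (misDeg Γ univ w : ℝ) := by
      rw [misDeg_univ]
      exact_mod_cast Γ.minDegree_le_degree w
    have h3 : (misDeg Γ R w : ℝ) < b := (mem_filter.1 hw).2
    have h1' : (misDeg Γ univ w : ℝ) = (misDeg Γ Df w : ℝ) + (misDeg Γ R w : ℝ) := by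
      exact_mod_cast h1
    rw [hδb] at h2
    linarith
  have f1 : L * (b*b - b) ≤ Dc * (k * (b*b)) := by
    have hs1 : L * (b*b - b) ≤ ∑ w ∈ Wl, (misDeg Γ Df w : ℝ) := by
      calc L * (b*b - b) = ∑ _w ∈ Wl, (b*b - b) := by
            rw [Finset.sum_const, hLdef]; ring
        _ ≤ _ := Finset.sum_le_sum hdeglow
    have hs2 : ∑ w ∈ Wl, (misDeg Γ Df w : ℝ) ≤ Dc * (k * (b*b)) := by
      have hdc : ∑ w ∈ Wl, (misDeg Γ Df w : ℕ) = ∑ v ∈ Df, (misDeg Γ Wl v : ℕ) :=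
        misDeg_doublecount Γ Wl Df
      have hterm : ∀ v ∈ Df, (misDeg Γ Wl v : ℝ) ≤ k * (b*b) := by
        intro v _
        have e1 : misDeg Γ Wl v ≤ misDeg Γ univ v :=
          card_le_card (filter_subset_filter _ (subset_univ Wl))
        have e2 : Γ.degree v ≤ Γ.maxDegree := Γ.degree_le_maxDegree v
        have e3 : (misDeg Γ univ v : ℝ) ≤ (Γ.maxDegree : ℝ) := by
          rw [misDeg_univ]; exact_mod_cast e2
        have e4 : (misDeg Γ Wl v : ℝ) ≤ (misDeg Γ univ v : ℝ) := by exact_mod_cast e1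
        rw [hδb] at hΔk
        linarith
      calc ∑ w ∈ Wl, (misDeg Γ Df w : ℝ) = ∑ v ∈ Df, (misDeg Γ Wl v : ℝ) := by
            exact_mod_cast hdc
        _ ≤ ∑ _v ∈ Df, k * (b*b) := Finset.sum_le_sum hterm
        _ = Dc * (k * (b*b)) := by rw [Finset.sum_const, hDcdef]; ring
    linarith
  -- algebra
  have hb0 : (0:ℝ) < b := by linarith
  have hk10 : (0:ℝ) < k + 1 := by linarith
  have hc : (0:ℝ) < (k+1)*b := by positivity
  rw [show k * N / (k+1) + 2 * N / b = (k*N*b + 2*N*(k+1)) / ((k+1)*b) by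
    field_simp]
  rw [le_div_iff₀ hc]
  have hkb2 : (0:ℝ) ≤ k*(b*b) := by nlinarith
  have f3 : L*((k+1)*(b*b) - b) ≤ N*(k*(b*b)) := by
    nlinarith [f1, mul_le_mul_of_nonneg_right hsplitN hkb2]
  have c1 : (0:ℝ) < (k+1)*(b*b) - b := by nlinarith
  have hT : L*((k+1)*b)*((k+1)*(b*b)-b) ≤ (N*(k*(b*b)))*((k+1)*b) := by
    nlinarith [mul_le_mul_of_nonneg_right f3 hc.le]
  have h2 : (0:ℝ) ≤ (2*(k+1)^2 - k)*b - 2*(k+1) := by nlinarith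
  have h1 : (0:ℝ) ≤ N*b*((2*(k+1)^2 - k)*b - 2*(k+1)) :=
    mul_nonneg (mul_nonneg hN0 hb0.le) h2
  have hU : (N*(k*(b*b)))*((k+1)*b) ≤ (k*N*b + 2*N*(k+1))*((k+1)*(b*b)-b) := by
    nlinarith [h1]
  exact le_of_mul_le_mul_right (by linarith) c1

end Aux

theorem mis_of_almost_regular_graph
    (k : ℝ) (hk : 1 ≤ k) (V : Type) [Fintype V] [DecidableEq V]
    (Γ : SimpleGraph V) [DecidableRel Γ.Adj]
    (n : ℕ) (hn : n = Fintype.card V)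
    (hδ : 1 ≤ Γ.minDegree)
    (hΔ : (Γ.maxDegree : ℝ) ≤ k * Γ.minDegree)
    (b : ℝ) (hb : b = Real.sqrt (Γ.minDegree : ℝ)) :
    (misSG Γ : ℝ) ≤ (∑ i ∈ Finset.Iic ⌊(n : ℝ) / b⌋₊, (n.choose i : ℝ)) *
      3 ^ ((k / (k + 1)) * ((n : ℝ) / 3) + 2 * (n : ℝ) / (3 * b)) := by
  classical
  have hδ0 : (0:ℝ) ≤ (Γ.minDegree : ℝ) := by positivity
  have hδ1 : (1:ℝ) ≤ (Γ.minDegree : ℝ) := by exact_mod_cast hδ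
  have hb1 : (1:ℝ) ≤ b := by rw [hb]; exact Real.one_le_sqrt.2 hδ1
  have hb0 : (0:ℝ) < b := by linarith
  have hδb : (Γ.minDegree : ℝ) = b * b := by rw [hb, Real.mul_self_sqrt hδ0]
  set t := ⌊(n : ℝ) / b⌋₊ with ht
  set e : ℝ := (k / (k + 1)) * ((n : ℝ) / 3) + 2 * (n : ℝ) / (3 * b) with he
  set Wlow : Finset V → Finset V := fun S => (misRem Γ univ S).filter
      (fun w => (misDeg Γ (misRem Γ univ S) w : ℝ) < b) with hWlow
  set SS := univ.powerset.filter (fun S : Finset V => S.card ≤ t) with hSS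
  set fS : Finset V → Finset V := fun I =>
    if h : misIndep Γ I then (fingerprint Γ b univ I h (subset_univ I)).choose else ∅
    with hfS
  have hspec : ∀ I : Finset V, misIndep Γ I → fS I ⊆ I ∧
      (b+1) * ((fS I).card : ℝ) ≤ (((univ : Finset V)).card : ℝ) -
        ((misRem Γ univ (fS I)).card : ℝ) ∧
      ∀ u ∈ I, u ∉ fS I → ((misDeg Γ (misRem Γ univ (fS I)) u : ℝ) < b) := by
    intro I h
    rw [hfS]; simp only [dif_pos h]
    exact (fingerprint Γ b univ I h (subset_univ I)).choose_spec
  have key : misF Γ univ ≤ ∑ S ∈ SS, misF Γ (Wlow S) := by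
    have hle : (univ.powerset.filter (misIsMIS Γ univ)).card ≤
        (SS.sigma (fun S => (Wlow S).powerset.filter (misIsMIS Γ (Wlow S)))).card := by
      apply card_le_card_of_injOn
        (fun I => (⟨fS I, I \ fS I⟩ : (_ : Finset V) × Finset V))
      · intro I hI
        obtain ⟨hIu, hind, hmax⟩ := (mem_filter.1 hI).2
        obtain ⟨hSI, hScard, hSdeg⟩ := hspec I hind
        have hcardt : (fS I).card ≤ t := by
          have hun : (((univ : Finset V)).card : ℝ) = (n:ℝ) := by
            rw [card_univ, hn]
          have hr0 : (0:ℝ) ≤ ((misRem Γ univ (fS I)).card : ℝ) := Nat.cast_nonneg _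
          have h1 : (b+1) * ((fS I).card : ℝ) ≤ (n : ℝ) := by
            rw [hun] at hScard; linarith
          rw [ht]
          apply Nat.le_floor
          rw [le_div_iff₀ hb0]
          have hc0 : (0:ℝ) ≤ ((fS I).card : ℝ) := Nat.cast_nonneg _
          nlinarith [h1]
        refine mem_sigma.2 ⟨?_, ?_⟩
        · rw [hSS, mem_filter]
          exact ⟨mem_powerset.2 (subset_univ _), hcardt⟩
        · rw [mem_filter, mem_powerset]
          have hsub : I \ fS I ⊆ Wlow (fS I) := by
            intro u hu
            obtain ⟨huI, huS⟩ := mem_sdiff.1 hu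
            refine mem_filter.2 ⟨?_, hSdeg u huI huS⟩
            refine mem_filter.2 ⟨mem_univ u, ?_⟩
            intro s hs
            rintro (h | h)
            · exact huS (h ▸ hs)
            · exact hind s (hSI hs) u huI h
          refine ⟨hsub, hsub,
            fun x hx y hy => hind x (sdiff_subset hx) y (sdiff_subset hy), ?_⟩
          intro x hx hxnon
          have hxR := (mem_filter.1 hx).1
          have hxS : ∀ s ∈ fS I, ¬(s = x ∨ Γ.Adj s x) := (mem_filter.1 hxR).2
          have hxI : x ∈ I := by
            apply hmax x (mem_univ x)
            intro y hy
            by_cases hyS : y ∈ fS I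
            · exact fun hadj => hxS y hyS (Or.inr hadj.symm)
            · exact hxnon y (mem_sdiff.2 ⟨hy, hyS⟩)
          have hxnS : x ∉ fS I := fun h => hxS x h (Or.inl rfl)
          exact mem_sdiff.2 ⟨hxI, hxnS⟩
      · intro I₁ h₁ I₂ h₂ heq
        have hind₁ : misIndep Γ I₁ := (mem_filter.1 h₁).2.2.1
        have hind₂ : misIndep Γ I₂ := (mem_filter.1 h₂).2.2.1
        have hs₁ := (hspec I₁ hind₁).1
        have hs₂ := (hspec I₂ hind₂).1
        have h1 : fS I₁ = fS I₂ := (Sigma.mk.inj_iff.1 heq).1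
        have h2 : I₁ \ fS I₁ = I₂ \ fS I₂ := eq_of_heq (Sigma.mk.inj_iff.1 heq).2
        calc I₁ = fS I₁ ∪ (I₁ \ fS I₁) := (union_sdiff_of_subset hs₁).symm
          _ = fS I₂ ∪ (I₂ \ fS I₂) := by rw [h2, h1]
          _ = I₂ := union_sdiff_of_subset hs₂
    calc misF Γ univ ≤ _ := hle
      _ = ∑ S ∈ SS, misF Γ (Wlow S) := by rw [card_sigma]; rfl
  have hWbound : ∀ S : Finset V, (misF Γ (Wlow S) : ℝ) ≤ (3:ℝ) ^ e := by
    intro S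
    calc (misF Γ (Wlow S) : ℝ) ≤ (3:ℝ) ^ (((Wlow S).card : ℝ)/3) := mm_bound Γ _
      _ ≤ (3:ℝ) ^ e := by
        apply Real.rpow_le_rpow_of_exponent_le (by norm_num)
        have hcb := wlow_card_bound Γ k b hk hb1 hδb hΔ S
        rw [← hn] at hcb
        rw [he]
        have h3 : 2 * (n:ℝ) / (3*b) = (2*(n:ℝ)/b)/3 := by
          rw [div_div, mul_comm b 3]
        have h4 : (k/(k+1)) * ((n:ℝ)/3) = (k*(n:ℝ)/(k+1))/3 := by ring
        rw [h3, h4]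
        have : ((Wlow S).card : ℝ) ≤ k * (n:ℝ) / (k+1) + 2*(n:ℝ)/b := hcb
        linarith
  have hSSeq : SS = (Iic t).biUnion (fun i => univ.powersetCard i) := by
    ext S
    simp only [hSS, mem_filter, mem_powerset, mem_biUnion, mem_Iic,
      mem_powersetCard_univ]
    constructor
    · rintro ⟨_, h⟩; exact ⟨S.card, h, rfl⟩
    · rintro ⟨i, hi, rfl⟩; exact ⟨subset_univ S, hi⟩
  have hcardSS : SS.card = ∑ i ∈ Iic t, n.choose i := by
    rw [hSSeq, card_biUnion]
    · refine sum_congr rfl fun i _ => ?_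
      rw [card_powersetCard, card_univ, ← hn]
    · intro i _ j _ hij
      rw [Function.onFun, disjoint_left]
      intro S hSi hSj
      rw [mem_powersetCard_univ] at hSi hSj
      exact hij (hSi ▸ hSj ▸ rfl)
  have hfinal : (misSG Γ : ℝ) ≤ (SS.card : ℝ) * (3:ℝ) ^ e := by
    have step1 : misSG Γ ≤ ∑ S ∈ SS, misF Γ (Wlow S) := (misSG_le_misF Γ).trans key
    calc (misSG Γ : ℝ) ≤ ((∑ S ∈ SS, misF Γ (Wlow S) : ℕ) : ℝ) := by exact_mod_cast step1
      _ = ∑ S ∈ SS, (misF Γ (Wlow S) : ℝ) := by push_cast; rfl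
      _ ≤ ∑ _S ∈ SS, (3:ℝ) ^ e := Finset.sum_le_sum fun S _ => hWbound S
      _ = (SS.card : ℝ) * (3:ℝ) ^ e := by rw [Finset.sum_const, nsmul_eq_mul]
  calc (misSG Γ : ℝ) ≤ (SS.card : ℝ) * (3:ℝ) ^ e := hfinal
    _ = (∑ i ∈ Finset.Iic t, (n.choose i : ℝ)) * (3:ℝ) ^ e := by
        rw [hcardSS]; push_cast; rfl
    _ = _ := by rw [he]
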